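/- Let (x_{n,m})_{n,m∈ℕ} be a double sequence of nonnegative real numbers such that limsup_{n→∞} limsup_{m→∞} x_{n,m} < ∞. Then there exists a strictly increasing sequence (m_n)_{n∈ℕ} of natural numbers with m_n > n² for all n, such that limsup_{n→∞} x_{n,m_n} ≤ limsup_{n→∞} limsup_{m→∞} x_{n,m}. -/

import Mathlib

open Filter

/-- diagonal subsequence along which the iterated `limsup` of a nonnegative
double sequence is not exceeded, with `m_n > n²`. -/
theorem limsup_diagonal_subsequence (x : ℕ → ℕ → ℝ) (hx : ∀ n m, 0 ≤ x n m)
    (hbd : limsup (fun n => limsup (fun m => (ENNReal.ofReal (x n m))) atTop) atTop < ⊤) :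
    ∃ ms : ℕ → ℕ, StrictMono ms ∧ (∀ n, n ^ 2 < ms n) ∧
      limsup (fun n => (ENNReal.ofReal (x n (ms n)))) atTop ≤
        limsup (fun n => limsup (fun m => (ENNReal.ofReal (x n m))) atTop) atTop := by
  set L : ℕ → ENNReal := fun n => limsup (fun m => ENNReal.ofReal (x n m)) atTop with hLdef
  have claim : ∀ n k, ∃ m, k < m ∧
      ENNReal.ofReal (x n m) ≤ L n + (↑(n+1) : ENNReal)⁻¹ := by
    intro n k
    by_cases h : L n = ⊤
    · exact ⟨k+1, Nat.lt_succ_self k, by simp [h]⟩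
    · by_contra hc
      push_neg at hc
      have hev : ∀ᶠ m in atTop,
          L n + (↑(n+1) : ENNReal)⁻¹ ≤ ENNReal.ofReal (x n m) := by
        filter_upwards [eventually_gt_atTop k] with m hm
        exact (hc m hm).le
      have h1 : L n + (↑(n+1) : ENNReal)⁻¹ ≤
          liminf (fun m => ENNReal.ofReal (x n m)) atTop := by
        have := liminf_le_liminf hev
        simpa using this
      have h2 : liminf (fun m => ENNReal.ofReal (x n m)) atTop ≤ L n := liminf_le_limsup
      have h3 : L n + (↑(n+1) : ENNReal)⁻¹ ≤ L n := h1.trans h2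
      have hpos : (0:ENNReal) < (↑(n+1) : ENNReal)⁻¹ := by
        simp [ENNReal.inv_pos]
      exact absurd h3 (not_le.mpr (ENNReal.lt_add_right h hpos.ne'))
  choose F hF1 hF2 using claim
  let ms : ℕ → ℕ := fun n =>
    Nat.rec (F 0 0) (fun n prev => F (n+1) (max prev ((n+1)^2))) n
  have hms_succ : ∀ n, ms (n+1) = F (n+1) (max (ms n) ((n+1)^2)) := fun n => rfl
  have hmono : StrictMono ms := by
    apply strictMono_nat_of_lt_succ
    intro n
    have := hF1 (n+1) (max (ms n) ((n+1)^2))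
    exact lt_of_le_of_lt (le_max_left _ _) (by rw [hms_succ]; exact this)
  have hsq : ∀ n, n ^ 2 < ms n := by
    intro n
    cases n with
    | zero => exact lt_of_le_of_lt (by simp) (hF1 0 0)
    | succ n =>
      have := hF1 (n+1) (max (ms n) ((n+1)^2))
      exact lt_of_le_of_lt (le_max_right _ _) (by rw [hms_succ]; exact this)
  have hbound : ∀ n, ENNReal.ofReal (x n (ms n)) ≤ L n + (↑(n+1) : ENNReal)⁻¹ := by
    intro n
    cases n with
    | zero => exact hF2 0 0
    | succ n => rw [hms_succ]; exact hF2 (n+1) _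
  refine ⟨ms, hmono, hsq, ?_⟩
  apply ENNReal.le_of_forall_pos_le_add
  intro ε hε hfin
  set Λ : ENNReal := limsup L atTop with hΛ
  have hε2 : (0:ENNReal) < (ε : ENNReal) / 2 := by
    simp [ENNReal.div_pos_iff, hε.ne']
  have hev1 : ∀ᶠ n in atTop, L n < Λ + (ε : ENNReal) / 2 :=
    eventually_lt_of_limsup_lt (ENNReal.lt_add_right hbd.ne hε2.ne') (by isBoundedDefault)
  have hev2 : ∀ᶠ n : ℕ in atTop, ((n+1 : ℕ) : ENNReal)⁻¹ ≤ (ε : ENNReal) / 2 := by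
    have h := ENNReal.tendsto_inv_nat_nhds_zero.eventually_le_const hε2
    filter_upwards [h] with n hn
    calc ((n+1 : ℕ) : ENNReal)⁻¹ ≤ (↑n : ENNReal)⁻¹ := by
          apply ENNReal.inv_le_inv.mpr; exact_mod_cast Nat.le_succ n
      _ ≤ (ε : ENNReal) / 2 := hn
  apply limsup_le_of_le (by isBoundedDefault)
  filter_upwards [hev1, hev2] with n h1 h2
  calc ENNReal.ofReal (x n (ms n)) ≤ L n + (↑(n+1) : ENNReal)⁻¹ := hbound n
    _ ≤ (Λ + (ε : ENNReal) / 2) + (ε : ENNReal) / 2 := add_le_add h1.le h2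
    _ = Λ + (ε : ENNReal) := by rw [add_assoc, ENNReal.add_halves]
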